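/- arXiv:2203.12584 — 2 statements merged into one kernel-verified Lean document; each statement's English description precedes it below -/
import Mathlib

section
/- Let ε > 0, v ≥ 0, τ ≥ 0, and consider the uniformly translating diffuse-interface profile φ(t,x) = tanh((x − v t)/(√2 ε)). Then the maximal pointwise displacement over one time step of length τ is max_{x ∈ ℝ} |φ(τ, x) − φ(0, x)| = 2 tanh( v τ / (2√2 ε) ), and the maximum is attained at the midpoint x = v τ / 2; i.e., the set { |φ(τ,x) − φ(0,x)| : x ∈ ℝ } has greatest element 2 tanh(v τ/(2√2 ε)). -/
open Real

lemma tanh_diff_formula (x y : ℝ) :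
    Real.tanh x - Real.tanh y = Real.sinh (x - y) / (Real.cosh x * Real.cosh y) := by
  rw [Real.tanh_eq_sinh_div_cosh, Real.tanh_eq_sinh_div_cosh, Real.sinh_sub]
  field_simp [(Real.cosh_pos x).ne', (Real.cosh_pos y).ne']

lemma key_bound (a u : ℝ) (ha : 0 ≤ a) :
    |Real.tanh (u - a) - Real.tanh u| ≤ 2 * Real.tanh (a / 2) := by
  have hcu := Real.cosh_pos u
  have hcv := Real.cosh_pos (u - a)
  have hca := Real.cosh_pos (a / 2)
  have hdiff : Real.tanh u - Real.tanh (u - a) =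
      Real.sinh a / (Real.cosh u * Real.cosh (u - a)) := by
    have := tanh_diff_formula u (u - a)
    simpa using this
  have hsa : 0 ≤ Real.sinh a := Real.sinh_nonneg_iff.mpr ha
  have hnonneg : 0 ≤ Real.tanh u - Real.tanh (u - a) := by
    rw [hdiff]; positivity
  rw [abs_sub_comm, abs_of_nonneg hnonneg, hdiff]
  -- denominator lower bound : cosh u * cosh (u-a) ≥ cosh(a/2)^2
  have hprod : Real.cosh (a / 2) ^ 2 ≤ Real.cosh u * Real.cosh (u - a) := by
    have hA := Real.cosh_add u (u - a)
    have hB := Real.cosh_sub u (u - a)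
    rw [show u - (u - a) = a by ring] at hB
    have h1 : Real.cosh u * Real.cosh (u - a) =
        (Real.cosh (u + (u - a)) + Real.cosh a) / 2 := by linarith
    have h2 : Real.cosh a = 2 * Real.cosh (a / 2) ^ 2 - 1 := by
      have := Real.cosh_two_mul (a / 2)
      have hsq := Real.cosh_sq (a / 2)
      have : Real.cosh (2 * (a / 2)) = Real.cosh (a / 2) ^ 2 + Real.sinh (a / 2) ^ 2 := this
      rw [show 2 * (a / 2) = a by ring] at this
      nlinarith [Real.cosh_sq_sub_sinh_sq (a / 2)]
    have h3 : (1 : ℝ) ≤ Real.cosh (u + (u - a)) := Real.one_le_cosh _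
    rw [h1, h2]
    linarith
  -- 2 * tanh(a/2) = sinh a / cosh(a/2)^2
  have htanh : 2 * Real.tanh (a / 2) = Real.sinh a / Real.cosh (a / 2) ^ 2 := by
    rw [Real.tanh_eq_sinh_div_cosh]
    have hs : Real.sinh a = 2 * Real.sinh (a / 2) * Real.cosh (a / 2) := by
      have := Real.sinh_two_mul (a / 2)
      rwa [show 2 * (a / 2) = a by ring] at this
    rw [hs]
    field_simp
  rw [htanh]
  exact div_le_div_of_nonneg_left hsa (by positivity) hprod

theorem stmt6 (ε v τ : ℝ) (hε : 0 < ε) (hv : 0 ≤ v) (hτ : 0 ≤ τ)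
    (φ : ℝ → ℝ → ℝ)
    (hφ : ∀ t x : ℝ, φ t x = Real.tanh ((x - v * t) / (Real.sqrt 2 * ε))) :
    IsGreatest (Set.range fun x : ℝ => |φ τ x - φ 0 x|)
      (2 * Real.tanh (v * τ / (2 * Real.sqrt 2 * ε))) ∧
    |φ τ (v * τ / 2) - φ 0 (v * τ / 2)| = 2 * Real.tanh (v * τ / (2 * Real.sqrt 2 * ε)) := by
  have hs2 : (0 : ℝ) < Real.sqrt 2 := Real.sqrt_pos.mpr (by norm_num)
  set c : ℝ := Real.sqrt 2 * ε with hc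
  have hcpos : 0 < c := by positivity
  set a : ℝ := v * τ / c with haa
  have ha : 0 ≤ a := by positivity
  have hhalf : v * τ / (2 * Real.sqrt 2 * ε) = a / 2 := by
    rw [haa, hc]; ring
  have hmid : |φ τ (v * τ / 2) - φ 0 (v * τ / 2)|
      = 2 * Real.tanh (v * τ / (2 * Real.sqrt 2 * ε)) := by
    rw [hφ, hφ, hhalf]
    have h1 : (v * τ / 2 - v * τ) / (Real.sqrt 2 * ε) = -(a / 2) := by
      rw [haa, hc]; ring
    have h2 : (v * τ / 2 - v * 0) / (Real.sqrt 2 * ε) = a / 2 := by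
      rw [haa, hc]; ring
    rw [h1, h2, Real.tanh_neg]
    have htnn : 0 ≤ Real.tanh (a / 2) := by
      rw [Real.tanh_eq_sinh_div_cosh]
      exact div_nonneg (Real.sinh_nonneg_iff.mpr (by linarith)) (Real.cosh_pos _).le
    rw [show -Real.tanh (a / 2) - Real.tanh (a / 2) = -(2 * Real.tanh (a / 2)) by ring,
      abs_neg, abs_of_nonneg (by linarith)]
  refine ⟨⟨⟨v * τ / 2, hmid⟩, ?_⟩, hmid⟩
  rintro y ⟨x, rfl⟩
  simp only
  rw [hφ, hφ, hhalf]
  have h1 : (x - v * τ) / (Real.sqrt 2 * ε) = x / c - a := by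
    rw [haa, hc]; ring
  have h2 : (x - v * 0) / (Real.sqrt 2 * ε) = x / c := by
    rw [hc]; field_simp; ring
  rw [h1, h2]
  exact key_bound a (x / c) ha
end

section
/- Let d ≥ 1 and let ρ : ℝ^d → ℝ and u, v : ℝ^d → ℝ^d be continuously differentiable, with u compactly supported and solenoidal, i.e., div u = 0 everywhere. Then ∫_{ℝ^d} [ Σ_{i,j} ∂_j(ρ u_i u_j) v_i + Σ_{i,j} ∂_j(ρ v_i u_j) u_i ] dx = ∫_{ℝ^d} (u·v)(u·∇ρ) dx. Consequently, the skew-symmetric stabilization form s(U;V) = −(1/2)∫ ∇·(ρ u ⊗ u)·v − (1/2)∫ ∇·(ρ v ⊗ u)·u + (1/2)∫ (u·v)(u·∇ρ) (the boundary term vanishing by compact support) is identically zero for solenoidal u, i.e., it forms a partition of zero. -/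
open MeasureTheory

/-- Partial derivative in the j-th coordinate direction of a scalar field on ℝ^d. -/
noncomputable def pd {d : ℕ} (j : Fin d) (f : (Fin d → ℝ) → ℝ) (x : Fin d → ℝ) : ℝ :=
  fderiv ℝ f x (Pi.single j 1)

section aux

variable {d : ℕ}

lemma pd_mul {f g : (Fin d → ℝ) → ℝ} {x : Fin d → ℝ} (hf : DifferentiableAt ℝ f x)
    (hg : DifferentiableAt ℝ g x) (j : Fin d) :
    pd j (fun y => f y * g y) x = pd j f x * g x + f x * pd j g x := by
  simp only [pd, fderiv_fun_mul hf hg, ContinuousLinearMap.add_apply,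
    ContinuousLinearMap.coe_smul', Pi.smul_apply, smul_eq_mul]
  ring

lemma pd_sum {ι : Type*} (s : Finset ι) {F : ι → (Fin d → ℝ) → ℝ} {x : Fin d → ℝ}
    (h : ∀ i ∈ s, DifferentiableAt ℝ (F i) x) (j : Fin d) :
    pd j (fun y => ∑ i ∈ s, F i y) x = ∑ i ∈ s, pd j (F i) x := by
  simp only [pd, fderiv_fun_sum h]
  simp

lemma pd_continuous {f : (Fin d → ℝ) → ℝ} (hf : ContDiff ℝ 1 f) (j : Fin d) :
    Continuous (pd j f) :=
  (hf.continuous_fderiv one_ne_zero).clm_apply continuous_const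

lemma pd_hcs {f : (Fin d → ℝ) → ℝ} (hf : HasCompactSupport f) (j : Fin d) :
    HasCompactSupport (pd j f) :=
  hf.fderiv_apply ℝ (Pi.single j 1)

lemma hcs_sum {ι : Type*} (s : Finset ι) {F : ι → (Fin d → ℝ) → ℝ}
    (h : ∀ i ∈ s, HasCompactSupport (F i)) :
    HasCompactSupport (fun y => ∑ i ∈ s, F i y) := by
  classical
  induction s using Finset.induction_on with
  | empty => simp only [Finset.sum_empty]; exact HasCompactSupport.zero
  | insert a s' hni ih =>
      simp only [Finset.sum_insert hni]
      exact (h a (Finset.mem_insert_self a s')).add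
        (ih fun i hi => h i (Finset.mem_insert_of_mem hi))

lemma integral_pd_eq_zero {f : (Fin d → ℝ) → ℝ} (hf : ContDiff ℝ 1 f)
    (hc : HasCompactSupport f) (j : Fin d) :
    ∫ x : Fin d → ℝ, pd j f x = 0 := by
  have h := integral_mul_fderiv_eq_neg_fderiv_mul_of_integrable
    (μ := (volume : Measure (Fin d → ℝ))) (f := fun _ => (1 : ℝ)) (g := f)
    (v := Pi.single j 1) ?_ ?_ ?_ (fun x _ => differentiableAt_const (1 : ℝ)) (fun x _ => (hf.differentiable one_ne_zero) x)
  · simpa [pd] using h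
  · simp
  · simp only [one_mul]
    exact ((pd_continuous hf j).integrable_of_hasCompactSupport (pd_hcs hc j))
  · simpa using (hf.continuous.integrable_of_hasCompactSupport hc)

lemma alg {d : ℕ} (a b Dρ : Fin d → ℝ) (r : ℝ) (DU DV : Fin d → Fin d → ℝ)
    (hdiv : ∑ j, DU j j = 0) :
    (∑ i, ∑ j, (((Dρ j * a i + r * DU i j) * a j + (r * a i) * DU j j) * b i))
    + (∑ i, ∑ j, (((Dρ j * b i + r * DV i j) * a j + (r * b i) * DU j j) * a i))
    = (∑ j, ((Dρ j * (∑ i, a i * b i)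
          + r * (∑ i, (DU i j * b i + a i * DV i j))) * a j
        + (r * (∑ i, a i * b i)) * DU j j))
      + (∑ i, a i * b i) * (∑ j, a j * Dρ j) := by
  classical
  have e1 : ∀ i j : Fin d,
      ((Dρ j * a i + r * DU i j) * a j + (r * a i) * DU j j) * b i =
        Dρ j * a i * b i * a j + r * DU i j * b i * a j + r * a i * b i * DU j j := by
    intros; ring
  have e2 : ∀ i j : Fin d,
      ((Dρ j * b i + r * DV i j) * a j + (r * b i) * DU j j) * a i =
        Dρ j * a i * b i * a j + r * a i * DV i j * a j + r * a i * b i * DU j j := by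
    intros; ring
  have hz1 : (∑ i, ∑ j, r * a i * b i * DU j j) = (0 : ℝ) := by
    have h : ∀ i ∈ Finset.univ, (∑ j, r * a i * b i * DU j j) = (0 : ℝ) := by
      intro i _
      rw [← Finset.mul_sum, hdiv, mul_zero]
    rw [Finset.sum_congr rfl h]
    simp
  have hz2 : (∑ j, (r * (∑ i, a i * b i)) * DU j j) = (0 : ℝ) := by
    rw [← Finset.mul_sum, hdiv, mul_zero]
  have e3 : ∀ j : Fin d,
      ((Dρ j * (∑ i, a i * b i) + r * (∑ i, (DU i j * b i + a i * DV i j))) * a j)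
        = ∑ i, ((Dρ j * (a i * b i) + r * (DU i j * b i + a i * DV i j)) * a j) := by
    intro j
    rw [Finset.mul_sum, Finset.mul_sum, ← Finset.sum_add_distrib, Finset.sum_mul]
  have e4 : (∑ i, a i * b i) * (∑ j, a j * Dρ j)
      = ∑ i, ∑ j, (a i * b i) * (a j * Dρ j) := by
    rw [Finset.sum_mul]
    exact Finset.sum_congr rfl fun i _ => Finset.mul_sum _ _ _
  simp only [e1, e2]
  rw [e4]
  simp only [e3]
  simp only [Finset.sum_add_distrib]
  rw [hz1, hz2, add_zero, add_zero, add_zero]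
  conv_rhs => rw [Finset.sum_comm]
  simp only [← Finset.sum_add_distrib]
  refine Finset.sum_congr rfl fun i _ => ?_
  refine Finset.sum_congr rfl fun j _ => ?_
  ring

end aux

theorem stmt9 {d : ℕ} (hd : 1 ≤ d)
    (ρ : (Fin d → ℝ) → ℝ) (u v : (Fin d → ℝ) → Fin d → ℝ)
    (hρ : ContDiff ℝ 1 ρ) (hu : ContDiff ℝ 1 u) (hv : ContDiff ℝ 1 v)
    (hcs : HasCompactSupport u)
    (hsol : ∀ y : Fin d → ℝ, ∑ j, pd j (fun z => u z j) y = 0) :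
    ((∫ x : Fin d → ℝ,
        ((∑ i, ∑ j, pd j (fun y => ρ y * u y i * u y j) x * v x i) +
          (∑ i, ∑ j, pd j (fun y => ρ y * v y i * u y j) x * u x i))) =
      ∫ x : Fin d → ℝ, (∑ i, u x i * v x i) * (∑ j, u x j * pd j ρ x)) ∧
    (-(1 / 2) * (∫ x : Fin d → ℝ, ∑ i, ∑ j, pd j (fun y => ρ y * u y i * u y j) x * v x i)
      - 1 / 2 * (∫ x : Fin d → ℝ, ∑ i, ∑ j, pd j (fun y => ρ y * v y i * u y j) x * u x i)
      + 1 / 2 * (∫ x : Fin d → ℝ, (∑ i, u x i * v x i) * (∑ j, u x j * pd j ρ x)) = 0) := by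
  classical
  have hui : ∀ i, ContDiff ℝ 1 (fun y => u y i) := fun i => (contDiff_pi.mp hu) i
  have hvi : ∀ i, ContDiff ℝ 1 (fun y => v y i) := fun i => (contDiff_pi.mp hv) i
  have hρd : Differentiable ℝ ρ := hρ.differentiable one_ne_zero
  have huid : ∀ i, Differentiable ℝ (fun y => u y i) := fun i => (hui i).differentiable one_ne_zero
  have hvid : ∀ i, Differentiable ℝ (fun y => v y i) := fun i => (hvi i).differentiable one_ne_zero
  have hSd : Differentiable ℝ (fun y => ∑ i, u y i * v y i) :=
    Differentiable.fun_sum (fun i _ => (huid i).mul (hvid i))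
  have hcs_of : ∀ (h : (Fin d → ℝ) → ℝ), (∀ y, u y = 0 → h y = 0) → HasCompactSupport h := by
    intro h H
    apply hcs.mono
    intro y hy
    simp only [Function.mem_support] at hy ⊢
    intro hc
    exact hy (H y hc)
  have hρuu : ∀ i j : Fin d, ContDiff ℝ 1 (fun y => ρ y * u y i * u y j) :=
    fun i j => (hρ.mul (hui i)).mul (hui j)
  have hρvu : ∀ i j : Fin d, ContDiff ℝ 1 (fun y => ρ y * v y i * u y j) :=
    fun i j => (hρ.mul (hvi i)).mul (hui j)
  have hρuuc : ∀ i j : Fin d, HasCompactSupport (fun y => ρ y * u y i * u y j) := by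
    intro i j; exact hcs_of _ (fun y hy => by simp [congrFun hy i, congrFun hy j])
  have hρvuc : ∀ i j : Fin d, HasCompactSupport (fun y => ρ y * v y i * u y j) := by
    intro i j; exact hcs_of _ (fun y hy => by simp [congrFun hy j])
  set f1 : (Fin d → ℝ) → ℝ :=
    fun x => ∑ i, ∑ j, pd j (fun y => ρ y * u y i * u y j) x * v x i with hf1
  set f2 : (Fin d → ℝ) → ℝ :=
    fun x => ∑ i, ∑ j, pd j (fun y => ρ y * v y i * u y j) x * u x i with hf2
  set R : (Fin d → ℝ) → ℝ :=
    fun x => (∑ i, u x i * v x i) * (∑ j, u x j * pd j ρ x) with hR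
  set g : Fin d → (Fin d → ℝ) → ℝ :=
    fun j y => ρ y * (∑ i, u y i * v y i) * u y j with hg
  have hgcd : ∀ j, ContDiff ℝ 1 (g j) := by
    intro j
    exact (hρ.mul (ContDiff.sum fun i _ => (hui i).mul (hvi i))).mul (hui j)
  have hgcs : ∀ j, HasCompactSupport (g j) := by
    intro j; exact hcs_of _ (fun y hy => by simp [hg, congrFun hy j])
  set W : (Fin d → ℝ) → ℝ := fun x => ∑ j, pd j (g j) x with hW
  have hf1c : Continuous f1 := by
    apply continuous_finset_sum; intro i _
    apply continuous_finset_sum; intro j _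
    exact (pd_continuous (hρuu i j) j).mul ((hvi i).continuous)
  have hf2c : Continuous f2 := by
    apply continuous_finset_sum; intro i _
    apply continuous_finset_sum; intro j _
    exact (pd_continuous (hρvu i j) j).mul ((hui i).continuous)
  have hRc : Continuous R := by
    apply Continuous.mul
    · exact continuous_finset_sum _ fun i _ => ((hui i).continuous).mul ((hvi i).continuous)
    · exact continuous_finset_sum _ fun j _ => ((hui j).continuous).mul (pd_continuous hρ j)
  have hWc : Continuous W :=
    continuous_finset_sum _ fun j _ => pd_continuous (hgcd j) j
  have hf1cs : HasCompactSupport f1 := by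
    apply hcs_sum; intro i _
    apply hcs_sum; intro j _
    exact (pd_hcs (hρuuc i j) j).mul_right
  have hf2cs : HasCompactSupport f2 := by
    apply hcs_sum; intro i _
    apply hcs_sum; intro j _
    exact (pd_hcs (hρvuc i j) j).mul_right
  have hRcs : HasCompactSupport R := by
    exact hcs_of _ (fun y hy => by simp [hR, congrFun hy])
  have hWcs : HasCompactSupport W := by
    apply hcs_sum; intro j _
    exact pd_hcs (hgcs j) j
  have hf1i : Integrable f1 := hf1c.integrable_of_hasCompactSupport hf1cs
  have hf2i : Integrable f2 := hf2c.integrable_of_hasCompactSupport hf2cs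
  have hRi : Integrable R := hRc.integrable_of_hasCompactSupport hRcs
  have hWi : Integrable W := hWc.integrable_of_hasCompactSupport hWcs
  have hWzero : ∫ x : Fin d → ℝ, W x = 0 := by
    rw [hW]
    rw [integral_finset_sum _ (fun j _ =>
      (pd_continuous (hgcd j) j).integrable_of_hasCompactSupport (pd_hcs (hgcs j) j))]
    exact Finset.sum_eq_zero fun j _ => integral_pd_eq_zero (hgcd j) (hgcs j) j
  have key : ∀ x, f1 x + f2 x = W x + R x := by
    intro x
    have pdρu : ∀ i j : Fin d, pd j (fun y => ρ y * u y i * u y j) x =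
        (pd j ρ x * u x i + ρ x * pd j (fun y => u y i) x) * u x j +
          (ρ x * u x i) * pd j (fun y => u y j) x := by
      intro i j
      rw [pd_mul ((hρd x).fun_mul (huid i x)) (huid j x), pd_mul (hρd x) (huid i x)]
    have pdρv : ∀ i j : Fin d, pd j (fun y => ρ y * v y i * u y j) x =
        (pd j ρ x * v x i + ρ x * pd j (fun y => v y i) x) * u x j +
          (ρ x * v x i) * pd j (fun y => u y j) x := by
      intro i j
      rw [pd_mul ((hρd x).fun_mul (hvid i x)) (huid j x), pd_mul (hρd x) (hvid i x)]
    have pdS : ∀ j : Fin d, pd j (fun y => ∑ i, u y i * v y i) x =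
        ∑ i, (pd j (fun y => u y i) x * v x i + u x i * pd j (fun y => v y i) x) := by
      intro j
      rw [pd_sum Finset.univ (fun i _ => (huid i x).fun_mul (hvid i x)) j]
      exact Finset.sum_congr rfl fun i _ => pd_mul (huid i x) (hvid i x) j
    have pdg : ∀ j : Fin d, pd j (g j) x =
        (pd j ρ x * (∑ i, u x i * v x i) +
          ρ x * ∑ i, (pd j (fun y => u y i) x * v x i + u x i * pd j (fun y => v y i) x)) * u x j
        + (ρ x * (∑ i, u x i * v x i)) * pd j (fun y => u y j) x := by
      intro j
      simp only [hg]
      rw [pd_mul ((hρd x).fun_mul (hSd x)) (huid j x), pd_mul (hρd x) (hSd x), pdS]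
    have halg := alg (fun i => u x i) (fun i => v x i) (fun j => pd j ρ x) (ρ x)
        (fun i j => pd j (fun y => u y i) x) (fun i j => pd j (fun y => v y i) x) (hsol x)
    simp only [hf1, hf2, hW, hR, pdρu, pdρv, pdg]
    exact halg
  have h1 : (∫ x : Fin d → ℝ, (f1 x + f2 x)) = ∫ x : Fin d → ℝ, R x := by
    calc (∫ x : Fin d → ℝ, (f1 x + f2 x)) = ∫ x : Fin d → ℝ, (W x + R x) :=
          integral_congr_ae (Filter.Eventually.of_forall (fun x => key x))
      _ = (∫ x : Fin d → ℝ, W x) + ∫ x : Fin d → ℝ, R x := integral_add hWi hRi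
      _ = ∫ x : Fin d → ℝ, R x := by rw [hWzero, zero_add]
  constructor
  · exact h1
  · have hsplit : (∫ x : Fin d → ℝ, (f1 x + f2 x))
        = (∫ x : Fin d → ℝ, f1 x) + ∫ x : Fin d → ℝ, f2 x := integral_add hf1i hf2i
    rw [hsplit] at h1
    linarith
end
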